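/- arXiv:2603.04624 — 3 statements merged into one kernel-verified Lean document; each statement's English description precedes it below -/
import Mathlib

section
/- Let V and W be bounded antichain-decomposable persistence modules over ℝ^d and let [p, q] be a segment of ℝ^d. Then [p, q] ∈ Seg_{V,W} if and only if (p ∈ ℝ^d_{V,W} and q ∈ ℝ^d_V) or (q ∈ ℝ^d_{V,W} and p ∈ ℝ^d_V). -/
open CategoryTheory CategoryTheory.Limits

noncomputable section

/-- Two elements `p q` of a subset `S` of a poset are order-connected in `S` if there is a
finite sequence of elements of `S` from `p` to `q` with consecutive terms comparable. -/
def OrderConnIn {P : Type} [PartialOrder P] (S : Set P) (p q : P) : Prop :=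
  p ∈ S ∧ Relation.ReflTransGen (fun a b => b ∈ S ∧ (a ≤ b ∨ b ≤ a)) p q

/-- A subset `S` of a poset is convex if `p ≤ r ≤ q` with `p, q ∈ S` implies `r ∈ S`. -/
def IsConvexSubset {P : Type} [PartialOrder P] (S : Set P) : Prop :=
  ∀ ⦃p r q : P⦄, p ∈ S → q ∈ S → p ≤ r → r ≤ q → r ∈ S

/-- An interval of a poset: a convex subset any two of whose elements are order-connected. -/
def IsPosetInterval {P : Type} [PartialOrder P] (S : Set P) : Prop :=
  IsConvexSubset S ∧ ∀ p ∈ S, ∀ q ∈ S, OrderConnIn S p q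

open Classical in
/-- The submodule of `F` which is everything at points of `I` and zero elsewhere. -/
def indSub (F : Type) [Field F] {P : Type} (I : Set P) (p : P) : Submodule F F :=
  if p ∈ I then ⊤ else ⊥

open Classical in
/-- The canonical map between submodules of `F`: the inclusion when it exists, zero otherwise. -/
def indMap (F : Type) [Field F] (S T : Submodule F F) : S →ₗ[F] T :=
  if h : S ≤ T then Submodule.inclusion h else 0

theorem indSub_subsingleton {F : Type} [Field F] {P : Type} {I : Set P} {p : P}
    (hp : p ∉ I) : Subsingleton (indSub F I p) := by
  rw [indSub, if_neg hp]
  infer_instance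

theorem indMap_comp (F : Type) [Field F] {P : Type} [PartialOrder P] {I : Set P}
    (hI : IsConvexSubset I) {p q r : P} (hpq : p ≤ q) (hqr : q ≤ r) :
    (indMap F (indSub F I q) (indSub F I r)).comp (indMap F (indSub F I p) (indSub F I q))
      = indMap F (indSub F I p) (indSub F I r) := by
  by_cases hp : p ∈ I
  · by_cases hr : r ∈ I
    · have hq : q ∈ I := hI hp hr hpq hqr
      have h1 : indSub F I p ≤ indSub F I q := by simp [indSub, hp, hq]
      have h2 : indSub F I q ≤ indSub F I r := by simp [indSub, hq, hr]
      have h3 : indSub F I p ≤ indSub F I r := h1.trans h2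
      simp only [indMap, dif_pos h1, dif_pos h2, dif_pos h3]
      ext x
      rfl
    · haveI := indSub_subsingleton (F := F) (I := I) hr
      exact LinearMap.ext fun x => Subsingleton.elim _ _
  · haveI := indSub_subsingleton (F := F) (I := I) hp
    apply LinearMap.ext
    intro x
    rw [Subsingleton.elim x 0]
    simp

/-- The indicator persistence module of a convex subset `I` of a poset `P`: it assigns `F` to
points of `I` and `0` to other points, with identity structure maps between points of `I` and
zero maps otherwise. -/
def indicatorModule (F : Type) [Field F] {P : Type} [PartialOrder P] (I : Set P)
    (hI : IsConvexSubset I) : P ⥤ ModuleCat.{0} F where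
  obj p := ModuleCat.of F (indSub F I p)
  map {p q} f := ModuleCat.ofHom (indMap F (indSub F I p) (indSub F I q))
  map_id p := by
    apply ModuleCat.hom_ext
    change indMap F (indSub F I p) (indSub F I p) = LinearMap.id
    simp only [indMap, dif_pos le_rfl]
    ext x
    rfl
  map_comp {p q r} f g := by
    apply ModuleCat.hom_ext
    change _ = (indMap F (indSub F I q) (indSub F I r)).comp
      (indMap F (indSub F I p) (indSub F I q))
    rw [indMap_comp F hI f.le g.le]
    rfl

/-- The support of a persistence module: the points where it is nonzero. -/
def suppMod (F : Type) [Field F] {P : Type} [PartialOrder P] (V : P ⥤ ModuleCat.{0} F) :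
    Set P := {p | Nontrivial (V.obj p)}

/-- The rank of the structure map of `V` associated to `p ≤ q`. -/
def rankMap (F : Type) [Field F] {P : Type} [PartialOrder P] (V : P ⥤ ModuleCat.{0} F)
    {p q : P} (h : p ≤ q) : ℕ :=
  Module.finrank F (LinearMap.range (V.map (homOfLE h)).hom)

/-- A persistence module is antichain-decomposable if it is isomorphic to a direct sum of
indicator modules of intervals whose elements are pairwise incomparable across distinct
summands. -/
def IsACD (F : Type) [Field F] {P : Type} [PartialOrder P] (V : P ⥤ ModuleCat.{0} F) : Prop :=
  ∃ (A : Type) (S : A → Set P) (hS : ∀ α, IsPosetInterval (S α)),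
    (∀ ⦃α β : A⦄, α ≠ β → ∀ p ∈ S α, ∀ q ∈ S β, ¬ p ≤ q ∧ ¬ q ≤ p) ∧
    Nonempty (V ≅ ∐ fun α => indicatorModule F (S α) (hS α).1)

/-- A persistence module is thin if it is pointwise of dimension `0` or `1`. -/
def IsThin (F : Type) [Field F] {P : Type} [PartialOrder P] (V : P ⥤ ModuleCat.{0} F) : Prop :=
  ∀ p : P, Module.rank F (V.obj p) = 0 ∨ Module.rank F (V.obj p) = 1

/-- We regard `ℝ^d` (with the product order) as a poset category. -/
instance (d : ℕ) : CategoryTheory.Category (Fin d → ℝ) := Preorder.smallCategory _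

open Classical in
/-- The rank invariant of `V` on the segment `[p, q]` (junk value `0` when `¬ p ≤ q`). -/
def rkInv (F : Type) [Field F] {d : ℕ} (V : (Fin d → ℝ) ⥤ ModuleCat.{0} F)
    (p q : Fin d → ℝ) : ℕ :=
  if h : p ≤ q then Module.finrank F (LinearMap.range (V.map (homOfLE h)).hom) else 0

/-- The rank invariant of `V` on the `ε`-thickening `[p - ε𝟙, q + ε𝟙]` of the segment `[p, q]`. -/
def rkShift (F : Type) [Field F] {d : ℕ} (V : (Fin d → ℝ) ⥤ ModuleCat.{0} F) (ε : ℝ)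
    (p q : Fin d → ℝ) : ℕ :=
  rkInv F V (fun i => p i - ε) (fun i => q i + ε)

/-- `ε` is a feasible erosion for the pair `(rk_V, rk_W)`: for every segment `[p, q]`,
`rk_V([p, q]^{+ε}) ≤ rk_W([p, q])` and `rk_W([p, q]^{+ε}) ≤ rk_V([p, q])`. -/
def Feasible (F : Type) [Field F] {d : ℕ} (V W : (Fin d → ℝ) ⥤ ModuleCat.{0} F) (ε : ℝ) :
    Prop :=
  ∀ p q : Fin d → ℝ, p ≤ q →
    rkShift F V ε p q ≤ rkInv F W p q ∧ rkShift F W ε p q ≤ rkInv F V p q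

/-- The erosion distance between the rank invariants of `V` and `W`. -/
def erosionDist (F : Type) [Field F] {d : ℕ} (V W : (Fin d → ℝ) ⥤ ModuleCat.{0} F) : ℝ :=
  sInf {ε : ℝ | 0 < ε ∧ Feasible F V W ε}

/-- `ℰ_{V,W}(I)` for the segment `I = [p, q]`. -/
def erosionPair (F : Type) [Field F] {d : ℕ} (V W : (Fin d → ℝ) ⥤ ModuleCat.{0} F)
    (p q : Fin d → ℝ) : ℝ :=
  sInf {ε : ℝ | 0 < ε ∧ rkShift F V ε p q ≤ rkInv F W p q ∧ rkShift F W ε p q ≤ rkInv F V p q}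

/-- `ℰ_V(I)` for the segment `I = [p, q]`. -/
def erosionOne (F : Type) [Field F] {d : ℕ} (V : (Fin d → ℝ) ⥤ ModuleCat.{0} F)
    (p q : Fin d → ℝ) : ℝ :=
  sInf {ε : ℝ | 0 < ε ∧ rkShift F V ε p q = 0}

/-- The segment `[p, q]` belongs to `Seg_{V,W}`, i.e. `rk_V([p, q]) = 1` and
`rk_W([p, q]) = 0`. -/
def SegMem (F : Type) [Field F] {d : ℕ} (V W : (Fin d → ℝ) ⥤ ModuleCat.{0} F)
    (p q : Fin d → ℝ) : Prop :=
  p ≤ q ∧ rkInv F V p q = 1 ∧ rkInv F W p q = 0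

/-- `V(u) ≅ F`. -/
def ptIsLine (F : Type) [Field F] {d : ℕ} (V : (Fin d → ℝ) ⥤ ModuleCat.{0} F)
    (u : Fin d → ℝ) : Prop :=
  Nonempty ((V.obj u) ≃ₗ[F] F)

/-- `ℝ^d_{V,W} = {u ∈ ℝ^d : V(u) ≅ F and W(u) = 0}`. -/
def RVW (F : Type) [Field F] {d : ℕ} (V W : (Fin d → ℝ) ⥤ ModuleCat.{0} F) :
    Set (Fin d → ℝ) :=
  {u | ptIsLine F V u ∧ Subsingleton (W.obj u)}

/-- `ℝ^d_V = {u ∈ ℝ^d : V(u) ≅ F}`. -/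
def RV (F : Type) [Field F] {d : ℕ} (V : (Fin d → ℝ) ⥤ ModuleCat.{0} F) :
    Set (Fin d → ℝ) :=
  {u | ptIsLine F V u}

/-- `ℰ^small_V(p) = sup_{q ≥ p} ℰ_V([p, q])`. -/
def erosionSmall (F : Type) [Field F] {d : ℕ} (V : (Fin d → ℝ) ⥤ ModuleCat.{0} F)
    (p : Fin d → ℝ) : ℝ :=
  sSup {x : ℝ | ∃ q : Fin d → ℝ, p ≤ q ∧ x = erosionOne F V p q}

/-- `ℰ^large_V(q) = sup_{p ≤ q} ℰ_V([p, q])`. -/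
def erosionLarge (F : Type) [Field F] {d : ℕ} (V : (Fin d → ℝ) ⥤ ModuleCat.{0} F)
    (q : Fin d → ℝ) : ℝ :=
  sSup {x : ℝ | ∃ p : Fin d → ℝ, p ≤ q ∧ x = erosionOne F V p q}

/-- `ℰ*(V, W) = max( sup_{p ∈ ℝ^d_{V,W}} ℰ^small_V(p), sup_{q ∈ ℝ^d_{V,W}} ℰ^large_V(q) )`. -/
def erosionStar (F : Type) [Field F] {d : ℕ} (V W : (Fin d → ℝ) ⥤ ModuleCat.{0} F) : ℝ :=
  max (sSup {x : ℝ | ∃ p ∈ RVW F V W, x = erosionSmall F V p})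
      (sSup {x : ℝ | ∃ q ∈ RVW F V W, x = erosionLarge F V q})

/-- A bounded antichain-decomposable module over `ℝ^d`: an ACD module whose support is a
bounded subset of `ℝ^d`. -/
def IsBoundedACD (F : Type) [Field F] {d : ℕ} (V : (Fin d → ℝ) ⥤ ModuleCat.{0} F) : Prop :=
  IsACD F V ∧ Bornology.IsBounded (suppMod F V)

-- ============ auxiliary development ============
section Auxiliary

variable {F : Type} [Field F] {d : ℕ}

private lemma lin_eq_zero {M N : ModuleCat.{0} F} (h : Subsingleton M) (f : M ⟶ N) : f = 0 := by
  ext x; rw [Subsingleton.elim x 0]; simp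

private lemma coprod_subsingleton {A : Type} (M : A → ModuleCat.{0} F)
    (h : ∀ α, Subsingleton (M α)) : Subsingleton (∐ M : ModuleCat.{0} F) := by
  have hid : 𝟙 (∐ M) = 0 := by
    apply Sigma.hom_ext
    intro b
    rw [lin_eq_zero (h b) (Sigma.ι M b ≫ 𝟙 (∐ M)), lin_eq_zero (h b) (Sigma.ι M b ≫ 0)]
  constructor
  intro a b
  calc a = (𝟙 (∐ M) : (∐ M : ModuleCat.{0} F) ⟶ ∐ M).hom a := rfl
    _ = 0 := by rw [hid]; rfl
    _ = (𝟙 (∐ M) : (∐ M : ModuleCat.{0} F) ⟶ ∐ M).hom b := by rw [hid]; rfl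
    _ = b := rfl

private lemma coprod_iso_unique {A : Type} (M : A → ModuleCat.{0} F) (β : A)
    (h : ∀ α, α ≠ β → Subsingleton (M α)) : Nonempty ((∐ M : ModuleCat.{0} F) ≅ M β) := by
  classical
  refine ⟨{ hom := Sigma.desc (fun α => if hh : α = β then eqToHom (by rw [hh]) else 0)
            inv := Sigma.ι M β, hom_inv_id := ?_, inv_hom_id := ?_ }⟩
  · apply Sigma.hom_ext
    intro b
    rw [← Category.assoc, Sigma.ι_desc, Category.comp_id]
    by_cases hb : b = β
    · subst hb; simp
    · rw [dif_neg hb, zero_comp, lin_eq_zero (h b hb) (Sigma.ι M b)]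
  · rw [Sigma.ι_desc, dif_pos rfl, eqToHom_refl]

/-- pointwise iso for evaluation of a coproduct of functors -/
private def evalCoprodIso {A : Type} (G : A → ((Fin d → ℝ) ⥤ ModuleCat.{0} F))
    (u : Fin d → ℝ) :
    ((∐ G).obj u) ≅ (∐ fun α => (G α).obj u : ModuleCat.{0} F) :=
  PreservesCoproduct.iso ((evaluation _ _).obj u) G

/-- equivalence of a point module of an indicator with F, if the point is in the set -/
private def indObjEquiv {I : Set (Fin d → ℝ)} (hI : IsConvexSubset I) {u : Fin d → ℝ}
    (hu : u ∈ I) : ((indicatorModule F I hI).obj u) ≃ₗ[F] F :=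
  (LinearEquiv.ofEq _ _ (by rw [indSub, if_pos hu] : indSub F I u = ⊤)).trans
    (Submodule.topEquiv)

section Pointwise
variable {A : Type} {S : A → Set (Fin d → ℝ)} (hS : ∀ α, IsPosetInterval (S α))

private lemma mem_unique
    (hdisj : ∀ ⦃α β : A⦄, α ≠ β → ∀ p ∈ S α, ∀ q ∈ S β, ¬ p ≤ q ∧ ¬ q ≤ p)
    {u : Fin d → ℝ} {α β : A} (hα : u ∈ S α) (hβ : u ∈ S β) : α = β := by
  by_contra hne
  exact (hdisj hne u hα u hβ).1 le_rfl

private lemma coprod_obj_equiv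
    (hdisj : ∀ ⦃α β : A⦄, α ≠ β → ∀ p ∈ S α, ∀ q ∈ S β, ¬ p ≤ q ∧ ¬ q ≤ p)
    {u : Fin d → ℝ} {β : A} (hu : u ∈ S β) :
    Nonempty (((∐ fun α => indicatorModule F (S α) (hS α).1).obj u) ≃ₗ[F] F) := by
  obtain ⟨i⟩ := coprod_iso_unique (fun α => (indicatorModule F (S α) (hS α).1).obj u) β
    (fun α hα => indSub_subsingleton (fun hmem => hα (mem_unique hdisj hmem hu)))
  exact ⟨((evalCoprodIso _ u).toLinearEquiv.trans i.toLinearEquiv).trans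
    (indObjEquiv (hS β).1 hu)⟩

private lemma coprod_obj_subsingleton {u : Fin d → ℝ} (hu : ∀ α, u ∉ S α) :
    Subsingleton ((∐ fun α => indicatorModule F (S α) (hS α).1).obj u) := by
  haveI := coprod_subsingleton (fun α => (indicatorModule F (S α) (hS α).1).obj u)
    (fun α => indSub_subsingleton (hu α))
  exact (evalCoprodIso (fun α =>
    indicatorModule F (S α) (hS α).1) u).toLinearEquiv.toEquiv.subsingleton

end Pointwise

private lemma rkInv_eq_of_iso {V U : (Fin d → ℝ) ⥤ ModuleCat.{0} F} (e : V ≅ U)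
    (p q : Fin d → ℝ) : rkInv F V p q = rkInv F U p q := by
  rw [rkInv, rkInv]
  split_ifs with h
  · set f := homOfLE h
    have hnat : V.map f ≫ e.hom.app q = e.hom.app p ≫ U.map f := e.hom.naturality f
    have h1 : Module.finrank F (LinearMap.range (V.map f).hom)
        = Module.finrank F (LinearMap.range (V.map f ≫ e.hom.app q : V.obj p ⟶ U.obj q).hom) := by
      have : (V.map f ≫ e.hom.app q : V.obj p ⟶ U.obj q).hom
          = ((e.app q).toLinearEquiv : V.obj q →ₗ[F] U.obj q).comp (V.map f).hom := rfl
      rw [this, LinearMap.range_comp, LinearEquiv.finrank_map_eq]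
    have h2 : LinearMap.range (e.hom.app p ≫ U.map f : V.obj p ⟶ U.obj q).hom
          = LinearMap.range (U.map f).hom := by
      have : (e.hom.app p ≫ U.map f : V.obj p ⟶ U.obj q).hom
          = (U.map f).hom.comp
              ((e.app p).toLinearEquiv : V.obj p →ₗ[F] U.obj p) := rfl
      rw [this]
      exact LinearMap.range_comp_of_range_eq_top _ (LinearEquiv.range (e.app p).toLinearEquiv)
    rw [h1, hnat, h2]
  · rfl

private lemma rkInv_eq_zero_left {V : (Fin d → ℝ) ⥤ ModuleCat.{0} F} {p q : Fin d → ℝ}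
    (h : Subsingleton (V.obj p)) : rkInv F V p q = 0 := by
  rw [rkInv]
  split_ifs with hle
  · have : (V.map (homOfLE hle)).hom = 0 := by
      ext x; rw [Subsingleton.elim x 0]; simp
    rw [this, LinearMap.range_zero, finrank_bot]
  · rfl

private lemma rkInv_eq_zero_right {V : (Fin d → ℝ) ⥤ ModuleCat.{0} F} {p q : Fin d → ℝ}
    (h : Subsingleton (V.obj q)) : rkInv F V p q = 0 := by
  rw [rkInv]
  split_ifs with hle
  · haveI : Subsingleton (LinearMap.range (V.map (homOfLE hle)).hom) :=
      ⟨fun a b => Subtype.ext (Subsingleton.elim _ _)⟩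
    exact Module.finrank_zero_of_subsingleton
  · rfl

private lemma rkInv_le_one {V : (Fin d → ℝ) ⥤ ModuleCat.{0} F} {p q : Fin d → ℝ}
    (E : V.obj p ≃ₗ[F] F) : rkInv F V p q ≤ 1 := by
  rw [rkInv]
  split_ifs with hle
  · haveI : Module.Finite F (V.obj p) := Module.Finite.equiv E.symm
    have := LinearMap.finrank_range_le (V.map (homOfLE hle)).hom
    rwa [E.finrank_eq, Module.finrank_self] at this
  · omega

private lemma rkInv_pos {V : (Fin d → ℝ) ⥤ ModuleCat.{0} F} {p q : Fin d → ℝ} (hpq : p ≤ q)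
    (E : V.obj q ≃ₗ[F] F) (x : V.obj p) (hx : V.map (homOfLE hpq) x ≠ 0) :
    1 ≤ rkInv F V p q := by
  rw [rkInv, dif_pos hpq]
  haveI : Module.Finite F (V.obj q) := Module.Finite.equiv E.symm
  by_contra hcon
  push_neg at hcon
  have hr : Module.finrank F (LinearMap.range (V.map (homOfLE hpq)).hom) = 0 := by omega
  have hmem : (V.map (homOfLE hpq)).hom x ∈ LinearMap.range (V.map (homOfLE hpq)).hom :=
    LinearMap.mem_range_self _ x
  rw [Submodule.finrank_eq_zero.mp hr, Submodule.mem_bot] at hmem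
  exact hx hmem

private lemma coprod_rk_one {A : Type} {S : A → Set (Fin d → ℝ)}
    (hS : ∀ α, IsPosetInterval (S α))
    (hdisj : ∀ ⦃α β : A⦄, α ≠ β → ∀ p ∈ S α, ∀ q ∈ S β, ¬ p ≤ q ∧ ¬ q ≤ p)
    {p q : Fin d → ℝ} {β : A} (hp : p ∈ S β) (hq : q ∈ S β) (hpq : p ≤ q) :
    rkInv F (∐ fun α => indicatorModule F (S α) (hS α).1) p q = 1 := by
  classical
  set G : A → ((Fin d → ℝ) ⥤ ModuleCat.{0} F) := fun α => indicatorModule F (S α) (hS α).1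
    with hG
  set U : (Fin d → ℝ) ⥤ ModuleCat.{0} F := ∐ G with hU
  obtain ⟨Ep⟩ := coprod_obj_equiv (F := F) hS hdisj hp
  obtain ⟨Eq'⟩ := coprod_obj_equiv (F := F) hS hdisj hq
  set ι : G β ⟶ U := Sigma.ι G β with hι
  set r : U ⟶ G β := Sigma.desc (fun α => if hh : α = β then eqToHom (by rw [hh]) else 0)
    with hr
  have hιr : ι ≫ r = 𝟙 (G β) := by rw [hι, hr, Sigma.ι_desc, dif_pos rfl, eqToHom_refl]
  have hmemp : (1 : F) ∈ indSub F (S β) p := by rw [indSub, if_pos hp]; trivial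
  set x0 : (G β).obj p := ⟨1, hmemp⟩ with hx0
  have hval : ((G β).map (homOfLE hpq)) x0 ≠ 0 := by
    show (indMap F (indSub F (S β) p) (indSub F (S β) q)) x0 ≠ 0
    have hle2 : indSub F (S β) p ≤ indSub F (S β) q := by simp [indSub, hp, hq]
    rw [indMap, dif_pos hle2]
    intro h
    exact one_ne_zero (congrArg Subtype.val h)
  have hinj : ∀ x, r.app q (ι.app q x) = x := by
    intro x
    have h1 : (ι ≫ r).app q = 𝟙 ((G β).obj q) := by rw [hιr]; rfl
    calc r.app q (ι.app q x) = ((ι ≫ r).app q).hom x := rfl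
      _ = x := by rw [h1]; rfl
  have hnat : (G β).map (homOfLE hpq) ≫ ι.app q = ι.app p ≫ U.map (homOfLE hpq) :=
    ι.naturality (homOfLE hpq)
  have hx : U.map (homOfLE hpq) (ι.app p x0) ≠ 0 := by
    have h2 : U.map (homOfLE hpq) (ι.app p x0)
        = ι.app q ((G β).map (homOfLE hpq) x0) := by
      calc U.map (homOfLE hpq) (ι.app p x0)
          = (ι.app p ≫ U.map (homOfLE hpq)).hom x0 := rfl
        _ = ((G β).map (homOfLE hpq) ≫ ι.app q).hom x0 := by rw [hnat]
        _ = _ := rfl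
    rw [h2]
    intro h0
    have h3 : (G β).map (homOfLE hpq) x0 = 0 := by
      have := congrArg (r.app q) h0
      rwa [hinj, map_zero] at this
    exact hval h3
  exact le_antisymm (rkInv_le_one Ep) (rkInv_pos hpq Eq' _ hx)

end Auxiliary

/-- a segment `[p, q]` belongs to `Seg_{V,W}` if and only if
(`p ∈ ℝ^d_{V,W}` and `q ∈ ℝ^d_V`) or (`q ∈ ℝ^d_{V,W}` and `p ∈ ℝ^d_V`). -/
theorem segVW_characterization (F : Type) [Field F] {d : ℕ}
    (V W : (Fin d → ℝ) ⥤ ModuleCat.{0} F)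
    (hV : IsBoundedACD F V) (hW : IsBoundedACD F W)
    (p q : Fin d → ℝ) (hpq : p ≤ q) :
    SegMem F V W p q ↔
      (p ∈ RVW F V W ∧ q ∈ RV F V) ∨ (q ∈ RVW F V W ∧ p ∈ RV F V) := by
  obtain ⟨⟨A, S, hS, hdisjV, ⟨eV⟩⟩, -⟩ := hV
  obtain ⟨⟨B, T, hT, hdisjW, ⟨eW⟩⟩, -⟩ := hW
  have lineV : ∀ u : Fin d → ℝ, ptIsLine F V u ↔ ∃ α, u ∈ S α := by
    intro u
    constructor
    · rintro ⟨E⟩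
      by_contra hno
      push_neg at hno
      haveI := coprod_obj_subsingleton (F := F) hS hno
      haveI : Subsingleton (V.obj u) := (eV.app u).toLinearEquiv.toEquiv.subsingleton
      haveI : Subsingleton F := E.symm.toEquiv.subsingleton
      exact one_ne_zero (Subsingleton.elim (1 : F) 0)
    · rintro ⟨α, hα⟩
      obtain ⟨E⟩ := coprod_obj_equiv (F := F) hS hdisjV hα
      exact ⟨(eV.app u).toLinearEquiv.trans E⟩
  have subW : ∀ u : Fin d → ℝ, Subsingleton (W.obj u) ↔ ∀ α, u ∉ T α := by
    intro u
    constructor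
    · intro hsub α hα
      obtain ⟨E⟩ := coprod_obj_equiv (F := F) hT hdisjW hα
      haveI := hsub
      haveI : Subsingleton F :=
        ((eW.app u).toLinearEquiv.trans E).symm.toEquiv.subsingleton
      exact one_ne_zero (Subsingleton.elim (1 : F) 0)
    · intro hno
      haveI := coprod_obj_subsingleton (F := F) hT hno
      exact (eW.app u).toLinearEquiv.toEquiv.subsingleton
  have R1 : rkInv F V p q = 1 ↔ ((∃ α, p ∈ S α) ∧ (∃ α, q ∈ S α)) := by
    constructor
    · intro h1
      constructor
      · by_contra hno
        push_neg at hno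
        haveI := coprod_obj_subsingleton (F := F) hS hno
        have hs : Subsingleton (V.obj p) := (eV.app p).toLinearEquiv.toEquiv.subsingleton
        rw [rkInv_eq_zero_left hs] at h1
        exact one_ne_zero h1.symm
      · by_contra hno
        push_neg at hno
        haveI := coprod_obj_subsingleton (F := F) hS hno
        have hs : Subsingleton (V.obj q) := (eV.app q).toLinearEquiv.toEquiv.subsingleton
        rw [rkInv_eq_zero_right hs] at h1
        exact one_ne_zero h1.symm
    · rintro ⟨⟨α, hα⟩, ⟨β, hβ⟩⟩
      have hab : α = β := by
        by_contra hne
        exact (hdisjV hne p hα q hβ).1 hpq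
      subst hab
      rw [rkInv_eq_of_iso eV]
      exact coprod_rk_one hS hdisjV hα hβ hpq
  have R0 : rkInv F W p q = 0 ↔ ((∀ α, p ∉ T α) ∨ (∀ α, q ∉ T α)) := by
    constructor
    · intro h0
      by_contra hno
      push_neg at hno
      obtain ⟨⟨α, hα⟩, ⟨β, hβ⟩⟩ := hno
      have hab : α = β := by
        by_contra hne
        exact (hdisjW hne p hα q hβ).1 hpq
      subst hab
      rw [rkInv_eq_of_iso eW, coprod_rk_one hT hdisjW hα hβ hpq] at h0
      exact one_ne_zero h0
    · rintro (h | h)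
      · haveI := coprod_obj_subsingleton (F := F) hT h
        exact rkInv_eq_zero_left ((eW.app p).toLinearEquiv.toEquiv.subsingleton)
      · haveI := coprod_obj_subsingleton (F := F) hT h
        exact rkInv_eq_zero_right ((eW.app q).toLinearEquiv.toEquiv.subsingleton)
  constructor
  · intro h
    have h' : p ≤ q ∧ rkInv F V p q = 1 ∧ rkInv F W p q = 0 := h
    obtain ⟨-, h1, h0⟩ := h'
    obtain ⟨hp', hq'⟩ := R1.mp h1
    rcases R0.mp h0 with h | h
    · exact Or.inl ⟨⟨(lineV p).mpr hp', (subW p).mpr h⟩, (lineV q).mpr hq'⟩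
    · exact Or.inr ⟨⟨(lineV q).mpr hq', (subW q).mpr h⟩, (lineV p).mpr hp'⟩
  · intro h
    have h' : ((ptIsLine F V p ∧ Subsingleton (W.obj p)) ∧ ptIsLine F V q) ∨
        ((ptIsLine F V q ∧ Subsingleton (W.obj q)) ∧ ptIsLine F V p) := h
    show p ≤ q ∧ rkInv F V p q = 1 ∧ rkInv F W p q = 0
    rcases h' with ⟨⟨hpl, hps⟩, hql⟩ | ⟨⟨hql, hqs⟩, hpl⟩
    · exact ⟨hpq, R1.mpr ⟨(lineV p).mp hpl, (lineV q).mp hql⟩,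
        R0.mpr (Or.inl ((subW p).mp hps))⟩
    · exact ⟨hpq, R1.mpr ⟨(lineV p).mp hpl, (lineV q).mp hql⟩,
        R0.mpr (Or.inr ((subW q).mp hqs))⟩

end
end

section
/- Let V be a pointwise finite-dimensional rank-maximal persistence module over a poset P and let i ≥ 1. Then the superlevel set supp^(i) V = {p ∈ P : dim V(p) ≥ i} is a convex subset of P; consequently the superlevel module V^(i) = 𝕀_{supp^(i) V} is a thin persistence module with convex support. -/
open CategoryTheory CategoryTheory.Limits

noncomputable section

/-- A persistence module is rank-maximal if the rank of each structure map is the minimum of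
the dimensions of its domain and codomain. -/
def RankMaximal (F : Type) [Field F] {P : Type} [PartialOrder P] (V : P ⥤ ModuleCat.{0} F) :
    Prop :=
  ∀ ⦃p q : P⦄ (h : p ≤ q),
    rankMap F V h = min (Module.finrank F (V.obj p)) (Module.finrank F (V.obj q))

/-- The `i`-th superlevel set of a persistence module: the points of dimension at least `i`. -/
def suppLevel (F : Type) [Field F] {P : Type} [PartialOrder P] (V : P ⥤ ModuleCat.{0} F)
    (i : ℕ) : Set P := {p | i ≤ Module.finrank F (V.obj p)}

theorem suppLevel_convex (F : Type) [Field F] {P : Type} [PartialOrder P]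
    (V : P ⥤ ModuleCat.{0} F) (hfd : ∀ p, FiniteDimensional F (V.obj p))
    (hrm : RankMaximal F V) (i : ℕ) : IsConvexSubset (suppLevel F V i) := by
  intro p r q hp hq hpr hrq
  haveI := hfd r
  haveI := hfd q
  have hfac : V.map (homOfLE (hpr.trans hrq)) = V.map (homOfLE hpr) ≫ V.map (homOfLE hrq) := by
    rw [← V.map_comp]
    rfl
  have h1 : rankMap F V (hpr.trans hrq) ≤ Module.finrank F (V.obj r) := by
    rw [rankMap, hfac]
    calc Module.finrank F (LinearMap.range ((V.map (homOfLE hrq)).hom.comp (V.map (homOfLE hpr)).hom))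
        ≤ Module.finrank F (LinearMap.range (V.map (homOfLE hrq)).hom) :=
          Submodule.finrank_mono (LinearMap.range_comp_le_range _ _)
      _ ≤ Module.finrank F (V.obj r) := LinearMap.finrank_range_le _
  exact le_trans (le_trans (le_min hp hq) (hrm (hpr.trans hrq)).ge) h1

/-- The `i`-th superlevel module of a rank-maximal pointwise finite-dimensional persistence
module: the indicator module of the `i`-th superlevel set. -/
def superMod (F : Type) [Field F] {P : Type} [PartialOrder P] (V : P ⥤ ModuleCat.{0} F)
    (hfd : ∀ p, FiniteDimensional F (V.obj p)) (hrm : RankMaximal F V) (i : ℕ) :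
    P ⥤ ModuleCat.{0} F :=
  indicatorModule F (suppLevel F V i) (suppLevel_convex F V hfd hrm i)

/-- for a pointwise finite-dimensional rank-maximal persistence module, each
superlevel set `supp^(i) V` (for `i ≥ 1`) is convex, and the corresponding superlevel module
(the indicator module of `supp^(i) V`) is a thin persistence module with convex support. -/
theorem superlevel_convex_thin (F : Type) [Field F] {P : Type} [PartialOrder P]
    (V : P ⥤ ModuleCat.{0} F) (hfd : ∀ p, FiniteDimensional F (V.obj p))
    (hrm : RankMaximal F V) (i : ℕ) (hi : 1 ≤ i) :
    ∃ hconv : IsConvexSubset (suppLevel F V i),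
      IsThin F (indicatorModule F (suppLevel F V i) hconv) ∧
      IsConvexSubset (suppMod F (indicatorModule F (suppLevel F V i) hconv)) := by
  set I := suppLevel F V i
  refine ⟨suppLevel_convex F V hfd hrm i, ?_, ?_⟩
  · intro p
    by_cases hp : p ∈ I
    · right
      have : indSub F I p = (⊤ : Submodule F F) := if_pos hp
      change Module.rank F (indSub F I p) = 1
      rw [this]
      simp
    · left
      have : indSub F I p = (⊥ : Submodule F F) := if_neg hp
      change Module.rank F (indSub F I p) = 0
      rw [this]
      exact rank_subsingleton' F _
  · have hsupp : suppMod F (indicatorModule F I (suppLevel_convex F V hfd hrm i)) = I := by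
      ext p
      constructor
      · intro hnt
        by_contra hp
        have := indSub_subsingleton (F := F) (I := I) hp
        exact not_subsingleton_iff_nontrivial.mpr hnt this
      · intro hp
        have : indSub F I p = (⊤ : Submodule F F) := if_pos hp
        change Nontrivial (indSub F I p)
        rw [this]
        exact ⟨⟨0, trivial⟩, ⟨1, trivial⟩, fun h =>
          zero_ne_one (congrArg Subtype.val h)⟩
    rw [hsupp]
    exact suppLevel_convex F V hfd hrm i

end
end

section
/- Let V and W be pointwise finite-dimensional rank-maximal persistence modules over ℝ^d with bounded support, and let M = max( sup_p dim V(p), sup_p dim W(p) ) < ∞. Then the erosion distance satisfies d_E(rk_V, rk_W) = max_{1 ≤ i ≤ M} d_E(rk_{V^(i)}, rk_{W^(i)}), where V^(i) and W^(i) are the superlevel modules of V and W. -/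
open CategoryTheory CategoryTheory.Limits

noncomputable section

section ErosionHelpers

theorem rkInv_zero_left (F : Type) [Field F] {d : ℕ} (V : (Fin d → ℝ) ⥤ ModuleCat.{0} F)
    {p q : Fin d → ℝ} (hs : Subsingleton (V.obj p)) : rkInv F V p q = 0 := by
  rw [rkInv]
  split_ifs with h
  · have hr : LinearMap.range (V.map (homOfLE h)).hom = ⊥ := by
      rw [Submodule.eq_bot_iff]
      intro x hx
      obtain ⟨y, rfl⟩ := hx
      rw [Subsingleton.elim y 0]
      exact map_zero _
    rw [hr, finrank_bot]
  · rfl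

theorem rkInv_zero_right (F : Type) [Field F] {d : ℕ} (V : (Fin d → ℝ) ⥤ ModuleCat.{0} F)
    {p q : Fin d → ℝ} (hs : Subsingleton (V.obj q)) : rkInv F V p q = 0 := by
  rw [rkInv]
  split_ifs with h
  · haveI : Subsingleton (LinearMap.range (V.map (homOfLE h)).hom) :=
      ⟨fun a b => Subtype.ext (Subsingleton.elim _ _)⟩
    exact Module.finrank_zero_of_subsingleton
  · rfl

open Classical in
theorem rkInv_indicator (F : Type) [Field F] {d : ℕ} (I : Set (Fin d → ℝ))
    (hI : IsConvexSubset I) {p q : Fin d → ℝ} (h : p ≤ q) :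
    rkInv F (indicatorModule F I hI) p q = if p ∈ I ∧ q ∈ I then 1 else 0 := by
  rw [rkInv, dif_pos h]
  show Module.finrank F (LinearMap.range (indMap F (indSub F I p) (indSub F I q))) = _
  by_cases hp : p ∈ I
  · by_cases hq : q ∈ I
    · have hps : indSub F I p = ⊤ := by simp [indSub, hp]
      have hqs : indSub F I q = ⊤ := by simp [indSub, hq]
      have hle : indSub F I p ≤ indSub F I q := by rw [hps, hqs]
      rw [if_pos ⟨hp, hq⟩, indMap, dif_pos hle, Submodule.range_inclusion, hps,
        Submodule.comap_top, finrank_top, hqs, finrank_top, Module.finrank_self]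
    · haveI := indSub_subsingleton (F := F) (I := I) hq
      haveI : Subsingleton (LinearMap.range (indMap F (indSub F I p) (indSub F I q))) :=
        ⟨fun a b => Subtype.ext (Subsingleton.elim _ _)⟩
      rw [if_neg fun hc => hq hc.2]
      exact Module.finrank_zero_of_subsingleton
  · haveI := indSub_subsingleton (F := F) (I := I) hp
    have hz : indMap F (indSub F I p) (indSub F I q) = 0 :=
      LinearMap.ext fun x => by rw [Subsingleton.elim x 0]; simp
    rw [if_neg fun hc => hp hc.1, hz, LinearMap.range_zero, finrank_bot]

theorem rkInv_superMod (F : Type) [Field F] {d : ℕ} (V : (Fin d → ℝ) ⥤ ModuleCat.{0} F)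
    (hfd : ∀ p, FiniteDimensional F (V.obj p)) (hrm : RankMaximal F V) (i : ℕ)
    {p q : Fin d → ℝ} (h : p ≤ q) :
    rkInv F (superMod F V hfd hrm i) p q = if i ≤ rkInv F V p q then 1 else 0 := by
  rw [superMod, rkInv_indicator F _ _ h]
  have hv : rkInv F V p q
      = min (Module.finrank F (V.obj p)) (Module.finrank F (V.obj q)) := by
    rw [rkInv, dif_pos h]; exact hrm h
  have hmem : (p ∈ suppLevel F V i ∧ q ∈ suppLevel F V i) ↔ i ≤ rkInv F V p q := by
    rw [hv, le_min_iff]; exact Iff.rfl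
  simp only [hmem]

theorem rkShift_superMod (F : Type) [Field F] {d : ℕ} (V : (Fin d → ℝ) ⥤ ModuleCat.{0} F)
    (hfd : ∀ p, FiniteDimensional F (V.obj p)) (hrm : RankMaximal F V) (i : ℕ)
    {ε : ℝ} (hε : 0 ≤ ε) {p q : Fin d → ℝ} (h : p ≤ q) :
    rkShift F (superMod F V hfd hrm i) ε p q = if i ≤ rkShift F V ε p q then 1 else 0 := by
  have h' : (fun j => p j - ε) ≤ fun j => q j + ε := fun j => by
    have := h j; dsimp; linarith
  rw [rkShift, rkShift]
  exact rkInv_superMod F V hfd hrm i h'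

theorem rkInv_le (F : Type) [Field F] {d : ℕ} (V : (Fin d → ℝ) ⥤ ModuleCat.{0} F)
    (hfd : ∀ p, FiniteDimensional F (V.obj p)) (p q : Fin d → ℝ) :
    rkInv F V p q ≤ Module.finrank F (V.obj q) := by
  rw [rkInv]
  split_ifs with h
  · haveI := hfd q
    exact Submodule.finrank_le _
  · exact Nat.zero_le _

theorem rkShift_le (F : Type) [Field F] {d : ℕ} (V : (Fin d → ℝ) ⥤ ModuleCat.{0} F)
    (hfd : ∀ p, FiniteDimensional F (V.obj p)) {M : ℕ}
    (hM : ∀ p, Module.finrank F (V.obj p) ≤ M) (ε : ℝ) (p q : Fin d → ℝ) :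
    rkShift F V ε p q ≤ M := by
  rw [rkShift]
  exact le_trans (rkInv_le F V hfd _ _) (hM _)

theorem rkShift_anti (F : Type) [Field F] {d : ℕ} (U : (Fin d → ℝ) ⥤ ModuleCat.{0} F)
    (hfd : ∀ p, FiniteDimensional F (U.obj p)) {p q : Fin d → ℝ} (hpq : p ≤ q)
    {ε ε' : ℝ} (h0 : 0 ≤ ε) (hee : ε ≤ ε') :
    rkShift F U ε' p q ≤ rkShift F U ε p q := by
  have h1 : (fun j => p j - ε') ≤ fun j => p j - ε := fun j => by dsimp; linarith
  have h2 : (fun j => p j - ε) ≤ fun j => q j + ε := fun j => by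
    have := hpq j; dsimp; linarith
  have h3 : (fun j => q j + ε) ≤ fun j => q j + ε' := fun j => by dsimp; linarith
  rw [rkShift, rkShift, rkInv, rkInv, dif_pos (h1.trans (h2.trans h3)), dif_pos h2]
  have hfac : U.map (homOfLE (h1.trans (h2.trans h3)))
      = U.map (homOfLE h1) ≫ U.map (homOfLE h2) ≫ U.map (homOfLE h3) := by
    rw [← U.map_comp, ← U.map_comp]
    rfl
  rw [hfac]
  haveI := hfd (fun j => q j + ε)
  haveI := hfd (fun j => q j + ε')
  have step1 : Module.finrank F
      (LinearMap.range (U.map (homOfLE h1) ≫ U.map (homOfLE h2) ≫ U.map (homOfLE h3)).hom)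
      = Module.finrank F (Submodule.map (U.map (homOfLE h3)).hom
          (LinearMap.range (U.map (homOfLE h1) ≫ U.map (homOfLE h2)).hom)) := by
    rw [← LinearMap.range_comp]
    rfl
  rw [step1]
  refine le_trans (Submodule.finrank_map_le _ _) ?_
  exact Submodule.finrank_mono (LinearMap.range_comp_le_range (U.map (homOfLE h1)).hom
    (U.map (homOfLE h2)).hom)

theorem feasible_iff_super (F : Type) [Field F] {d : ℕ}
    (V W : (Fin d → ℝ) ⥤ ModuleCat.{0} F)
    (hfdV : ∀ p, FiniteDimensional F (V.obj p)) (hfdW : ∀ p, FiniteDimensional F (W.obj p))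
    (hrmV : RankMaximal F V) (hrmW : RankMaximal F W) (M : ℕ)
    (hMV : ∀ p, Module.finrank F (V.obj p) ≤ M) (hMW : ∀ p, Module.finrank F (W.obj p) ≤ M)
    {ε : ℝ} (hε : 0 < ε) :
    Feasible F V W ε ↔ ∀ i ∈ Finset.Icc 1 M,
      Feasible F (superMod F V hfdV hrmV i) (superMod F W hfdW hrmW i) ε := by
  constructor
  · intro hf i hi p q hpq
    obtain ⟨h1, h2⟩ := hf p q hpq
    rw [rkShift_superMod F V hfdV hrmV i hε.le hpq, rkShift_superMod F W hfdW hrmW i hε.le hpq,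
      rkInv_superMod F V hfdV hrmV i hpq, rkInv_superMod F W hfdW hrmW i hpq]
    constructor <;> split_ifs <;> omega
  · intro hf p q hpq
    constructor
    · rcases Nat.eq_zero_or_pos (rkShift F V ε p q) with h0 | h0
      · rw [h0]; exact Nat.zero_le _
      · have hi : rkShift F V ε p q ∈ Finset.Icc 1 M :=
          Finset.mem_Icc.mpr ⟨h0, rkShift_le F V hfdV hMV ε p q⟩
        have h3 := (hf _ hi p q hpq).1
        rw [rkShift_superMod F V hfdV hrmV _ hε.le hpq,
          rkInv_superMod F W hfdW hrmW _ hpq, if_pos le_rfl] at h3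
        by_contra hc
        rw [if_neg hc] at h3
        omega
    · rcases Nat.eq_zero_or_pos (rkShift F W ε p q) with h0 | h0
      · rw [h0]; exact Nat.zero_le _
      · have hi : rkShift F W ε p q ∈ Finset.Icc 1 M :=
          Finset.mem_Icc.mpr ⟨h0, rkShift_le F W hfdW hMW ε p q⟩
        have h3 := (hf _ hi p q hpq).2
        rw [rkShift_superMod F W hfdW hrmW _ hε.le hpq,
          rkInv_superMod F V hfdV hrmV _ hpq, if_pos le_rfl] at h3
        by_contra hc
        rw [if_neg hc] at h3
        omega

theorem rkShift_zero_of_bounded (F : Type) [Field F] {d : ℕ} (hd : 0 < d)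
    (U : (Fin d → ℝ) ⥤ ModuleCat.{0} F) (hb : Bornology.IsBounded (suppMod F U)) :
    ∃ C : ℝ, 0 < C ∧ ∀ ε : ℝ, C ≤ ε → ∀ p q : Fin d → ℝ, p ≤ q → rkShift F U ε p q = 0 := by
  obtain ⟨R, hR⟩ := isBounded_iff_forall_norm_le.mp hb
  refine ⟨2 * max R 0 + 1, by positivity, fun ε hε p q hpq => ?_⟩
  by_cases h1 : Nontrivial (U.obj (fun j => p j - ε))
  · by_cases h2 : Nontrivial (U.obj (fun j => q j + ε))
    · exfalso
      have m1 : ‖fun j => p j - ε‖ ≤ R := hR _ h1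
      have m2 : ‖fun j => q j + ε‖ ≤ R := hR _ h2
      set j : Fin d := ⟨0, hd⟩
      have a1 : |p j - ε| ≤ R := by
        have := norm_le_pi_norm (fun j => p j - ε) j
        rw [Real.norm_eq_abs] at this
        exact this.trans m1
      have a2 : |q j + ε| ≤ R := by
        have := norm_le_pi_norm (fun j => q j + ε) j
        rw [Real.norm_eq_abs] at this
        exact this.trans m2
      have hpqj := hpq j
      rw [abs_le] at a1 a2
      have hRm : R ≤ max R 0 := le_max_left _ _
      have hRm0 : (0:ℝ) ≤ max R 0 := le_max_right _ _
      linarith [a1.2, a2.1]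
    · rw [rkShift]
      exact rkInv_zero_right F U (not_nontrivial_iff_subsingleton.mp h2)
  · rw [rkShift]
    exact rkInv_zero_left F U (not_nontrivial_iff_subsingleton.mp h1)

theorem sInf_inter_eq_sSup_sInf (s : Finset ℕ) (S : ℕ → Set ℝ)
    (hpos : ∀ i ∈ s, ∀ ε ∈ S i, (0:ℝ) < ε)
    (hup : ∀ i ∈ s, ∀ ε ∈ S i, ∀ ε', ε ≤ ε' → ε' ∈ S i)
    (ε0 : ℝ) (hε0 : 0 < ε0) (h0 : ∀ i ∈ s, ε0 ∈ S i) :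
    sInf {ε : ℝ | 0 < ε ∧ ∀ i ∈ s, ε ∈ S i} = sSup {x : ℝ | ∃ i ∈ s, x = sInf (S i)} := by
  have hTb : BddBelow {ε : ℝ | 0 < ε ∧ ∀ i ∈ s, ε ∈ S i} := ⟨0, fun x hx => hx.1.le⟩
  have hTne : {ε : ℝ | 0 < ε ∧ ∀ i ∈ s, ε ∈ S i}.Nonempty := ⟨ε0, hε0, h0⟩
  have hSb : ∀ i ∈ s, BddBelow (S i) := fun i hi => ⟨0, fun x hx => (hpos i hi x hx).le⟩
  have hD_eq : {x : ℝ | ∃ i ∈ s, x = sInf (S i)} = (fun i => sInf (S i)) '' ↑s := by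
    ext x
    simp only [Set.mem_setOf_eq, Set.mem_image, Finset.mem_coe]
    constructor
    · rintro ⟨i, hi, rfl⟩; exact ⟨i, hi, rfl⟩
    · rintro ⟨i, hi, rfl⟩; exact ⟨i, hi, rfl⟩
  have hDfin : {x : ℝ | ∃ i ∈ s, x = sInf (S i)}.Finite := by
    rw [hD_eq]; exact s.finite_toSet.image _
  have hDbdd : BddAbove {x : ℝ | ∃ i ∈ s, x = sInf (S i)} := hDfin.bddAbove
  have hDnn : ∀ x ∈ {x : ℝ | ∃ i ∈ s, x = sInf (S i)}, 0 ≤ x := by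
    rintro x ⟨i, hi, rfl⟩
    exact Real.sInf_nonneg fun ε hε => (hpos i hi ε hε).le
  apply le_antisymm
  · by_contra hlt
    push_neg at hlt
    obtain ⟨ε, h1, h2⟩ := exists_between hlt
    have hmem : ε ∈ {ε : ℝ | 0 < ε ∧ ∀ i ∈ s, ε ∈ S i} := by
      refine ⟨lt_of_le_of_lt (Real.sSup_nonneg hDnn) h1, fun i hi => ?_⟩
      have hlt2 : sInf (S i) < ε := lt_of_le_of_lt (le_csSup hDbdd ⟨i, hi, rfl⟩) h1
      obtain ⟨δ, hδ, hδlt⟩ := (csInf_lt_iff (hSb i hi) ⟨ε0, h0 i hi⟩).mp hlt2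
      exact hup i hi δ hδ ε hδlt.le
    exact absurd (csInf_le hTb hmem) (not_le.mpr h2)
  · refine Real.sSup_le ?_ (le_csInf hTne fun x hx => hx.1.le)
    rintro x ⟨i, hi, rfl⟩
    exact csInf_le_csInf (hSb i hi) hTne fun ε hε => hε.2 i hi

end ErosionHelpers

/-- for pointwise finite-dimensional rank-maximal modules over `ℝ^d` with
bounded support whose pointwise dimensions have maximum `M`, the erosion distance equals the
maximum over `i = 1, …, M` of the erosion distances between the superlevel modules. -/
theorem erosion_dist_eq_max_superlevel (F : Type) [Field F] {d : ℕ}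
    (V W : (Fin d → ℝ) ⥤ ModuleCat.{0} F)
    (hfdV : ∀ p, FiniteDimensional F (V.obj p)) (hfdW : ∀ p, FiniteDimensional F (W.obj p))
    (hrmV : RankMaximal F V) (hrmW : RankMaximal F W)
    (hbV : Bornology.IsBounded (suppMod F V)) (hbW : Bornology.IsBounded (suppMod F W))
    (M : ℕ)
    (hMV : ∀ p, Module.finrank F (V.obj p) ≤ M) (hMW : ∀ p, Module.finrank F (W.obj p) ≤ M)
    (hMmax : (∃ p, Module.finrank F (V.obj p) = M) ∨ (∃ p, Module.finrank F (W.obj p) = M)) :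
    erosionDist F V W =
      sSup {x : ℝ | ∃ i ∈ Finset.Icc 1 M,
        x = erosionDist F (superMod F V hfdV hrmV i) (superMod F W hfdW hrmW i)} := by
  classical
  rcases Nat.eq_zero_or_pos d with hd | hd
  · -- degenerate case `d = 0`: every erosion distance is `0`
    subst hd
    have hshift : ∀ (U : (Fin 0 → ℝ) ⥤ ModuleCat.{0} F) (ε : ℝ) (p q : Fin 0 → ℝ),
        rkShift F U ε p q = rkInv F U p q := by
      intro U ε p q
      have e1 : (fun j : Fin 0 => p j - ε) = p := funext fun j => absurd j.2 (by omega)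
      have e2 : (fun j : Fin 0 => q j + ε) = q := funext fun j => absurd j.2 (by omega)
      rw [rkShift, e1, e2]
    have key : ∀ U U' : (Fin 0 → ℝ) ⥤ ModuleCat.{0} F, erosionDist F U U' = 0 := by
      intro U U'
      have hfeas : ∀ ε ε' : ℝ, Feasible F U U' ε → Feasible F U U' ε' := by
        intro ε ε' hf p q hpq
        have h := hf p q hpq
        rw [hshift, hshift] at h
        rw [hshift, hshift]
        exact h
      rw [erosionDist]
      by_cases hX : Feasible F U U' 1
      · have hset : {ε : ℝ | 0 < ε ∧ Feasible F U U' ε} = Set.Ioi 0 := by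
          ext ε
          exact ⟨fun h => h.1, fun h => ⟨h, hfeas 1 ε hX⟩⟩
        rw [hset]
        exact csInf_Ioi
      · have hset : {ε : ℝ | 0 < ε ∧ Feasible F U U' ε} = ∅ := by
          ext ε
          simp only [Set.mem_setOf_eq, Set.mem_empty_iff_false, iff_false, not_and]
          exact fun _ hε => hX (hfeas ε 1 hε)
        rw [hset]
        exact Real.sInf_empty
    rw [key]
    symm
    apply le_antisymm
    · refine Real.sSup_le ?_ le_rfl
      rintro x ⟨i, -, rfl⟩
      rw [key]
    · refine Real.sSup_nonneg ?_
      rintro x ⟨i, -, rfl⟩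
      rw [key]
  · -- main case `0 < d`
    have hfdSV : ∀ i p, FiniteDimensional F ((superMod F V hfdV hrmV i).obj p) := fun i p =>
      inferInstanceAs (FiniteDimensional F (indSub F (suppLevel F V i) p))
    have hfdSW : ∀ i p, FiniteDimensional F ((superMod F W hfdW hrmW i).obj p) := fun i p =>
      inferInstanceAs (FiniteDimensional F (indSub F (suppLevel F W i) p))
    obtain ⟨CV, hCV, hzV⟩ := rkShift_zero_of_bounded F hd V hbV
    obtain ⟨CW, hCW, hzW⟩ := rkShift_zero_of_bounded F hd W hbW
    set ε0 : ℝ := max CV CW with hε0def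
    have hε0 : 0 < ε0 := lt_of_lt_of_le hCV (le_max_left _ _)
    have hzV0 : ∀ p q : Fin d → ℝ, p ≤ q → rkShift F V ε0 p q = 0 :=
      hzV ε0 (le_max_left _ _)
    have hzW0 : ∀ p q : Fin d → ℝ, p ≤ q → rkShift F W ε0 p q = 0 :=
      hzW ε0 (le_max_right _ _)
    set S : ℕ → Set ℝ := fun i =>
      {ε : ℝ | 0 < ε ∧ Feasible F (superMod F V hfdV hrmV i) (superMod F W hfdW hrmW i) ε}
      with hSdef
    have h0 : ∀ i ∈ Finset.Icc 1 M, ε0 ∈ S i := by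
      intro i hi
      have hi1 : 1 ≤ i := (Finset.mem_Icc.mp hi).1
      refine ⟨hε0, fun p q hpq => ?_⟩
      constructor
      · rw [rkShift_superMod F V hfdV hrmV i hε0.le hpq, hzV0 p q hpq,
          if_neg (by omega : ¬ i ≤ 0)]
        exact Nat.zero_le _
      · rw [rkShift_superMod F W hfdW hrmW i hε0.le hpq, hzW0 p q hpq,
          if_neg (by omega : ¬ i ≤ 0)]
        exact Nat.zero_le _
    have hup : ∀ i ∈ Finset.Icc 1 M, ∀ ε ∈ S i, ∀ ε', ε ≤ ε' → ε' ∈ S i := by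
      intro i _ ε hε ε' hee
      refine ⟨lt_of_lt_of_le hε.1 hee, fun p q hpq => ?_⟩
      obtain ⟨h1, h2⟩ := hε.2 p q hpq
      exact ⟨le_trans (rkShift_anti F _ (hfdSV i) hpq hε.1.le hee) h1,
        le_trans (rkShift_anti F _ (hfdSW i) hpq hε.1.le hee) h2⟩
    have heq : {ε : ℝ | 0 < ε ∧ Feasible F V W ε}
        = {ε : ℝ | 0 < ε ∧ ∀ i ∈ Finset.Icc 1 M, ε ∈ S i} := by
      ext ε
      simp only [Set.mem_setOf_eq, hSdef]
      constructor
      · rintro ⟨hε, hf⟩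
        exact ⟨hε, fun i hi =>
          ⟨hε, (feasible_iff_super F V W hfdV hfdW hrmV hrmW M hMV hMW hε).mp hf i hi⟩⟩
      · rintro ⟨hε, hf⟩
        exact ⟨hε, (feasible_iff_super F V W hfdV hfdW hrmV hrmW M hMV hMW hε).mpr
          fun i hi => (hf i hi).2⟩
    have hfin := sInf_inter_eq_sSup_sInf (Finset.Icc 1 M) S
      (fun i _ ε hε => hε.1) hup ε0 hε0 h0
    rw [erosionDist, heq, hfin]
    rfl

end
end
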